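/- Consider the commutative ring R = ℤ[s,t]/(s² − 2t, s·t). Then: (a) for every j ≥ 2 the image of t^j in R satisfies 2·t^j = 0; and (b) as an abelian group, R is isomorphic to ℤ³ ⊕ (⊕_{j ≥ 2} ℤ/2ℤ), where the free part of rank 3 is spanned by the images of 1, s, t, and the j-th torsion summand is generated by the image of t^j for j ≥ 2. -/

import Mathlib

open MvPolynomial

/-- The ring `R = ℤ[s,t]/(s² - 2t, st)`, with `s = X 0` and `t = X 1`. -/
noncomputable abbrev CautisRing : Type :=
  MvPolynomial (Fin 2) ℤ ⧸
    Ideal.span {(X 0 ^ 2 - 2 * X 1 : MvPolynomial (Fin 2) ℤ), X 0 * X 1}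

/-- The image of `s` in `R`. -/
noncomputable def CautisRing.s : CautisRing := Ideal.Quotient.mk _ (X 0)

/-- The image of `t` in `R`. -/
noncomputable def CautisRing.t : CautisRing := Ideal.Quotient.mk _ (X 1)

namespace CautisAux

open DirectSum

noncomputable abbrev I : Ideal (MvPolynomial (Fin 2) ℤ) :=
  Ideal.span {(X 0 ^ 2 - 2 * X 1 : MvPolynomial (Fin 2) ℤ), X 0 * X 1}

abbrev P : Type := ℤ × ℤ × ℤ × (DirectSum ℕ (fun _ => ZMod 2))

noncomputable abbrev mk : MvPolynomial (Fin 2) ℤ →+* CautisRing := Ideal.Quotient.mk I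

lemma hst : CautisRing.s * CautisRing.t = 0 := by
  have h0 : mk (X 0 * X 1) = 0 :=
    Ideal.Quotient.eq_zero_iff_mem.mpr (Ideal.subset_span (by simp))
  rw [map_mul] at h0
  exact h0

lemma hs2 : CautisRing.s ^ 2 = 2 * CautisRing.t := by
  have h0 : mk (X 0 ^ 2 - 2 * X 1) = 0 :=
    Ideal.Quotient.eq_zero_iff_mem.mpr (Ideal.subset_span (by simp))
  simp only [map_sub, map_mul, map_pow, map_ofNat] at h0
  exact sub_eq_zero.mp h0

lemma h2t2 : (2 : CautisRing) * CautisRing.t ^ 2 = 0 := by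
  linear_combination CautisRing.s * hst - CautisRing.t * hs2

lemma h2t (j : ℕ) : (2 : CautisRing) * CautisRing.t ^ (j + 2) = 0 := by
  linear_combination CautisRing.t ^ j * h2t2

lemma hs3 : CautisRing.s ^ 3 = 0 := by
  linear_combination 2 * hst + CautisRing.s * hs2

/-- Forward map component on the torsion part. -/
noncomputable def toR2 (j : ℕ) : ZMod 2 →+ CautisRing :=
  ZMod.lift 2 ⟨(zmultiplesHom CautisRing) (CautisRing.t ^ (j + 2)), by
    simpa [zmultiplesHom] using h2t j⟩

lemma toR2_one (j : ℕ) : toR2 j 1 = CautisRing.t ^ (j + 2) := by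
  have h : ((1 : ℤ) : ZMod 2) = 1 := by norm_num
  calc toR2 j 1 = toR2 j ((1:ℤ) : ZMod 2) := by rw [h]
    _ = (zmultiplesHom CautisRing) (CautisRing.t ^ (j+2)) 1 := ZMod.lift_coe _ _ _
    _ = _ := one_zsmul _

/-- The forward additive map `ℤ³ × ⊕ ℤ/2 → R`. -/
noncomputable def F : P →+ CautisRing where
  toFun x := x.1 • 1 + x.2.1 • CautisRing.s + x.2.2.1 • CautisRing.t
      + DirectSum.toAddMonoid toR2 x.2.2.2
  map_zero' := by simp
  map_add' x y := by
    simp only [Prod.fst_add, Prod.snd_add, add_smul, map_add]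
    abel

lemma F_apply (x : P) :
    F x = x.1 • 1 + x.2.1 • CautisRing.s + x.2.2.1 • CautisRing.t
      + DirectSum.toAddMonoid toR2 x.2.2.2 := rfl

lemma F1 : F (1,0,0,0) = 1 := by rw [F_apply]; simp
lemma F2 : F (0,1,0,0) = CautisRing.s := by rw [F_apply]; simp
lemma F3 : F (0,0,1,0) = CautisRing.t := by rw [F_apply]; simp
lemma Fof (j : ℕ) (x : ZMod 2) :
    F (0,0,0, DirectSum.of (fun _ => ZMod 2) j x) = toR2 j x := by
  rw [F_apply]; simp

/-- Normal form of the monomial `s^a t^b` as an element of `P`. -/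
noncomputable def nf2 : ℕ → ℕ → P
  | 0, 0 => (1,0,0,0)
  | 1, 0 => (0,1,0,0)
  | 2, 0 => (0,0,2,0)
  | 0, 1 => (0,0,1,0)
  | 0, b+2 => (0,0,0, DirectSum.of (fun _ => ZMod 2) b 1)
  | _, _ => 0

lemma nf2_pos_pos (a b : ℕ) : nf2 (a+1) (b+1) = 0 := by
  rcases a with _|_|a <;> rfl

/-- Inverse map at the polynomial level: sum the normal forms of all monomials. -/
noncomputable def psi : MvPolynomial (Fin 2) ℤ →+ P :=
  (Finsupp.liftAddHom (fun (d : Fin 2 →₀ ℕ) => (zmultiplesHom P) (nf2 (d 0) (d 1)))).comp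
    AddMonoidAlgebra.coeffAddEquiv.toAddMonoidHom

lemma psi_monomial (d : Fin 2 →₀ ℕ) (c : ℤ) :
    psi (monomial d c) = c • nf2 (d 0) (d 1) := by
  rw [← single_eq_monomial]
  exact Finsupp.liftAddHom_apply_single (fun (d : Fin 2 →₀ ℕ) => (zmultiplesHom P) (nf2 (d 0) (d 1))) _ _

lemma key1 (a b : ℕ) (c : ℤ) : c • nf2 (a+2) b + (-(2*c)) • nf2 a (b+1) = 0 := by
  match a, b with
  | 0, 0 =>
    show c • ((0,0,2,0) : P) + (-(2*c)) • ((0,0,1,0) : P) = 0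
    simp [Prod.ext_iff]; ring
  | 0, b+1 =>
    show c • (0:P) + (-(2*c)) • ((0,0,0, DirectSum.of (fun _ => ZMod 2) b 1) : P) = 0
    have e2 : (-(2*c)) • (1 : ZMod 2) = 0 := by
      rw [zsmul_one]
      push_cast
      rw [show (2 : ZMod 2) = 0 by decide, zero_mul, neg_zero]
    have e1 : (-(2*c)) • (DirectSum.of (fun _ => ZMod 2) b 1)
        = DirectSum.of (fun _ => ZMod 2) b ((-(2*c)) • (1 : ZMod 2)) :=
      (map_zsmul (DirectSum.of (fun _ => ZMod 2) b) _ _).symm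
    rw [smul_zero, zero_add]
    show ((-(2*c)) • (0:ℤ), (-(2*c)) • (0:ℤ), (-(2*c)) • (0:ℤ),
      (-(2*c)) • DirectSum.of (fun _ => ZMod 2) b 1) = (0:P)
    rw [e1, e2, map_zero]
    simp
  | a+1, b =>
    rw [show a+1+2 = a+3 by ring, show (nf2 (a+3) b) = 0 from rfl, nf2_pos_pos]
    simp

lemma psi_g1 (p : MvPolynomial (Fin 2) ℤ) : psi (p * (X 0 ^ 2 - 2 * X 1)) = 0 := by
  induction p using MvPolynomial.induction_on' with
  | add p q hp hq => rw [add_mul, map_add, hp, hq, add_zero]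
  | monomial d c =>
    have h1 : (X 0 : MvPolynomial (Fin 2) ℤ) ^ 2 = monomial (Finsupp.single 0 2) 1 :=
      X_pow_eq_monomial
    have h2 : (2 : MvPolynomial (Fin 2) ℤ) * X 1 = monomial (Finsupp.single 1 1) 2 := by
      rw [← C_mul_X_eq_monomial, map_ofNat]
    have e : monomial d c * (X 0 ^ 2 - 2 * X 1)
        = monomial (d + Finsupp.single 0 2) c
          + monomial (d + Finsupp.single 1 1) (-(2*c)) := by
      rw [mul_sub, h1, h2, monomial_mul, monomial_mul, mul_one,
        sub_eq_add_neg, ← map_neg, mul_comm c 2]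
    rw [e, map_add, psi_monomial, psi_monomial]
    have e0 : (d + Finsupp.single 0 2 : Fin 2 →₀ ℕ) 0 = d 0 + 2 := by
      simp [Finsupp.add_apply, Finsupp.single_apply]
    have e1 : (d + Finsupp.single 0 2 : Fin 2 →₀ ℕ) 1 = d 1 := by
      simp [Finsupp.add_apply, Finsupp.single_apply]
    have e2 : (d + Finsupp.single 1 1 : Fin 2 →₀ ℕ) 0 = d 0 := by
      simp [Finsupp.add_apply, Finsupp.single_apply]
    have e3 : (d + Finsupp.single 1 1 : Fin 2 →₀ ℕ) 1 = d 1 + 1 := by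
      simp [Finsupp.add_apply, Finsupp.single_apply]
    rw [e0, e1, e2, e3]
    exact key1 (d 0) (d 1) c

lemma psi_g2 (p : MvPolynomial (Fin 2) ℤ) : psi (p * (X 0 * X 1)) = 0 := by
  induction p using MvPolynomial.induction_on' with
  | add p q hp hq => rw [add_mul, map_add, hp, hq, add_zero]
  | monomial d c =>
    have h1 : (X 0 : MvPolynomial (Fin 2) ℤ) * X 1
        = monomial (Finsupp.single 0 1 + Finsupp.single 1 1) 1 := by
      rw [show (X 0 : MvPolynomial (Fin 2) ℤ) = monomial (Finsupp.single 0 1) 1 by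
          rw [← X_pow_eq_monomial, pow_one],
        show (X 1 : MvPolynomial (Fin 2) ℤ) = monomial (Finsupp.single 1 1) 1 by
          rw [← X_pow_eq_monomial, pow_one],
        monomial_mul, mul_one]
    have e : monomial d c * (X 0 * X 1)
        = monomial (d + (Finsupp.single 0 1 + Finsupp.single 1 1)) c := by
      rw [h1, monomial_mul, mul_one]
    rw [e, psi_monomial]
    have e0 : (d + (Finsupp.single 0 1 + Finsupp.single 1 1) : Fin 2 →₀ ℕ) 0 = d 0 + 1 := by
      simp [Finsupp.add_apply, Finsupp.single_apply]
    have e1 : (d + (Finsupp.single 0 1 + Finsupp.single 1 1) : Fin 2 →₀ ℕ) 1 = d 1 + 1 := by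
      simp [Finsupp.add_apply, Finsupp.single_apply]
    rw [e0, e1, nf2_pos_pos, smul_zero]

lemma psi_ideal : ∀ x ∈ I, psi x = 0 := by
  intro x hx
  rw [Ideal.mem_span_pair] at hx
  obtain ⟨u, v, huv⟩ := hx
  rw [← huv, map_add, psi_g1, psi_g2, add_zero]

/-- The inverse additive map on the quotient. -/
noncomputable def G : CautisRing →+ P :=
  QuotientAddGroup.lift I.toAddSubgroup psi psi_ideal

lemma G_mk (x : MvPolynomial (Fin 2) ℤ) : G (mk x) = psi x := rfl

lemma G1 : G 1 = (1,0,0,0) := by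
  have : (1 : CautisRing) = mk (monomial 0 1) := by
    rw [show (monomial (0 : Fin 2 →₀ ℕ) (1:ℤ)) = 1 from ?_, map_one]
    · rw [← C_apply, map_one]
  rw [this, G_mk, psi_monomial]
  show (1:ℤ) • nf2 0 0 = (1,0,0,0)
  rw [one_smul]; rfl

lemma Gs : G CautisRing.s = (0,1,0,0) := by
  have hX : (X 0 : MvPolynomial (Fin 2) ℤ) = monomial (Finsupp.single 0 1) 1 := by
    rw [← X_pow_eq_monomial, pow_one]
  show G (mk (X 0)) = (0,1,0,0)
  rw [G_mk, hX, psi_monomial]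
  have e0 : (Finsupp.single (0 : Fin 2) 1) 0 = 1 := by simp
  have e1 : (Finsupp.single (0 : Fin 2) 1) 1 = 0 := by simp [Finsupp.single_apply]
  rw [e0, e1, one_smul]; rfl

lemma Gt : G CautisRing.t = (0,0,1,0) := by
  have hX : (X 1 : MvPolynomial (Fin 2) ℤ) = monomial (Finsupp.single 1 1) 1 := by
    rw [← X_pow_eq_monomial, pow_one]
  show G (mk (X 1)) = (0,0,1,0)
  rw [G_mk, hX, psi_monomial]
  have e0 : (Finsupp.single (1 : Fin 2) 1) 0 = 0 := by simp [Finsupp.single_apply]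
  have e1 : (Finsupp.single (1 : Fin 2) 1) 1 = 1 := by simp
  rw [e0, e1, one_smul]; rfl

lemma Gt2 (j : ℕ) : G (CautisRing.t ^ (j+2)) = (0,0,0, DirectSum.of (fun _ => ZMod 2) j 1) := by
  have : CautisRing.t ^ (j+2) = mk (X 1 ^ (j+2)) := by rw [map_pow]; rfl
  rw [this, G_mk, X_pow_eq_monomial, psi_monomial]
  have e0 : (Finsupp.single (1 : Fin 2) (j+2)) 0 = 0 := by simp [Finsupp.single_apply]
  have e1 : (Finsupp.single (1 : Fin 2) (j+2)) 1 = j+2 := by simp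
  rw [e0, e1, one_smul]; rfl

lemma GFof (j : ℕ) (x : ZMod 2) :
    G (F (0,0,0, DirectSum.of (fun _ => ZMod 2) j x))
      = (0,0,0, DirectSum.of (fun _ => ZMod 2) j x) := by
  have hx : x = 0 ∨ x = 1 := by
    revert x; decide
  rcases hx with rfl | rfl
  · rw [map_zero (DirectSum.of (fun _ => ZMod 2) j)]
    show G (F 0) = 0
    rw [map_zero, map_zero]
  · rw [Fof, toR2_one, Gt2]

lemma GFD (f : DirectSum ℕ (fun _ => ZMod 2)) :
    G (F (0,0,0,f)) = (0,0,0,f) := by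
  induction f using DirectSum.induction_on with
  | zero => show G (F 0) = 0; rw [map_zero, map_zero]
  | of j x => exact GFof j x
  | add f g hf hg =>
    have h : ((0,0,0,f+g) : P) = (0,0,0,f) + (0,0,0,g) := by
      simp [Prod.ext_iff]
    rw [h, map_add, map_add, hf, hg]

lemma GF (x : P) : G (F x) = x := by
  obtain ⟨a, b, c, f⟩ := x
  have hx : ((a,b,c,f) : P)
      = a • (1,0,0,0) + b • (0,1,0,0) + c • (0,0,1,0) + (0,0,0,f) := by
    simp [Prod.ext_iff]
  rw [hx]
  simp only [map_add, map_zsmul]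
  rw [F1, F2, F3, G1, Gs, Gt, GFD]

lemma F_inj : Function.Injective F := by
  intro x y h
  have := congrArg G h
  rwa [GF, GF] at this

lemma mem_range (a b : ℕ) : ∃ x : P, F x = CautisRing.s ^ a * CautisRing.t ^ b :=
  match a, b with
  | 0, 0 => ⟨(1,0,0,0), by rw [F1]; simp⟩
  | 1, 0 => ⟨(0,1,0,0), by rw [F2]; simp⟩
  | 2, 0 => ⟨(0,0,2,0), by
      rw [F_apply]
      simp only [zero_smul, zero_add, add_zero, map_zero, pow_zero, mul_one]
      rw [hs2, zsmul_eq_mul]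
      push_cast
      ring⟩
  | 0, 1 => ⟨(0,0,1,0), by rw [F3]; simp⟩
  | 0, b+2 => ⟨(0,0,0, DirectSum.of (fun _ => ZMod 2) b 1), by
      rw [Fof, toR2_one, pow_zero, one_mul]⟩
  | a+3, 0 => ⟨0, by
      rw [map_zero]
      linear_combination (-(CautisRing.s ^ a)) * hs3⟩
  | a+1, b+1 => ⟨0, by
      rw [map_zero]
      linear_combination (-(CautisRing.s ^ a * CautisRing.t ^ b)) * hst⟩

lemma F_surj : Function.Surjective F := by
  intro y
  obtain ⟨p, rfl⟩ := Ideal.Quotient.mk_surjective (I := I) y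
  induction p using MvPolynomial.induction_on' with
  | add p q hp hq =>
    obtain ⟨x, hx⟩ := hp
    obtain ⟨y, hy⟩ := hq
    exact ⟨x + y, by rw [map_add, hx, hy, map_add]⟩
  | monomial d c =>
    obtain ⟨x, hx⟩ := mem_range (d 0) (d 1)
    refine ⟨c • x, ?_⟩
    rw [map_zsmul, hx]
    have hd : d = Finsupp.single 0 (d 0) + Finsupp.single 1 (d 1) := by
      ext i
      fin_cases i <;> simp [Finsupp.add_apply, Finsupp.single_apply]
    have hmon : (monomial d c : MvPolynomial (Fin 2) ℤ)
        = C c * (X 0 ^ (d 0) * X 1 ^ (d 1)) := by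
      rw [X_pow_eq_monomial, X_pow_eq_monomial, monomial_mul, one_mul,
        C_mul_monomial, mul_one, ← hd]
    rw [hmon, ← smul_eq_C_mul, map_zsmul, map_mul, map_pow, map_pow]
    rfl

end CautisAux

/-- In `R = ℤ[s,t]/(s² - 2t, st)`: (a) `2·t^j = 0` for all `j ≥ 2`; and
(b) as an abelian group `R ≅ ℤ³ ⊕ ⊕_{j≥2} ℤ/2ℤ`, where the free part is spanned by the
images of `1, s, t` and the `j`-th torsion summand is generated by the image of `t^j`
(indexed below by `j = j'+2` for `j' : ℕ`). -/
theorem cautisRing_structure :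
    (∀ j : ℕ, 2 ≤ j → (2 : CautisRing) * CautisRing.t ^ j = 0) ∧
    ∃ e : (ℤ × ℤ × ℤ × (DirectSum ℕ (fun _ => ZMod 2))) ≃+ CautisRing,
      e (1, 0, 0, 0) = 1 ∧
      e (0, 1, 0, 0) = CautisRing.s ∧
      e (0, 0, 1, 0) = CautisRing.t ∧
      ∀ j' : ℕ, e (0, 0, 0, DirectSum.of (fun _ => ZMod 2) j' 1) =
        CautisRing.t ^ (j' + 2) := by
  constructor
  · intro j hj
    obtain ⟨k, rfl⟩ := Nat.exists_eq_add_of_le hj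
    rw [show 2 + k = k + 2 by ring]
    exact CautisAux.h2t k
  · refine ⟨AddEquiv.ofBijective CautisAux.F ⟨CautisAux.F_inj, CautisAux.F_surj⟩,
      ?_, ?_, ?_, ?_⟩
    · exact CautisAux.F1
    · exact CautisAux.F2
    · exact CautisAux.F3
    · intro j'
      exact (CautisAux.Fof j' 1).trans (CautisAux.toR2_one j')
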